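/- arXiv:1008.5205 — 3 statements merged into one kernel-verified Lean document; each statement's English description precedes it below -/
import Mathlib

section
/- Let a ∈ B be invertible in a unital ring B and suppose ω : S → S satisfies t·ω(b) = b + (t-1)·F(ω(b)) for a fixed scalar t, where F(w) = w - a w⁻¹ a and F(w) a⁻¹ w = w a⁻¹ F(w) for all w ∈ S (with all elements of S invertible). Then b a⁻¹ ω(b) = ω(b) a⁻¹ b for all b. -/
/-- If `ω : S → S` satisfies `t·ω(b) = b + (t-1)·F(ω(b))` for a fixed scalar `t`, where
`F(w) = w - a w⁻¹ a` on a set `S` of invertible elements and `F(w) a⁻¹ w = w a⁻¹ F(w)` for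
all `w ∈ S`, then `b a⁻¹ ω(b) = ω(b) a⁻¹ b` for all `b ∈ S`. -/
theorem omega_commutation {B : Type*} [Ring B] [Algebra ℂ B] (a : B) [Invertible a]
    (S : Set B) (inv : B → B) (hinv : ∀ w ∈ S, w * inv w = 1 ∧ inv w * w = 1)
    (t : ℂ) (F : B → B) (hFdef : ∀ w ∈ S, F w = w - a * inv w * a)
    (hcomm : ∀ w ∈ S, F w * ⅟a * w = w * ⅟a * F w)
    (ω : B → B) (hωS : ∀ b ∈ S, ω b ∈ S)
    (hω : ∀ b ∈ S, t • ω b = b + (t - 1) • F (ω b)) :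
    ∀ b ∈ S, b * ⅟a * ω b = ω b * ⅟a * b := by
  intro b hb
  have hc := hcomm (ω b) (hωS b hb)
  have hb' : b = t • ω b - (t - 1) • F (ω b) :=
    (eq_sub_iff_add_eq).mpr (hω b hb).symm
  set c := ω b with hcdef
  rw [hb']
  simp only [sub_mul, mul_sub, smul_mul_assoc, mul_smul_comm, hc]
end

section
/- If X and Y are Boolean independent self-adjoint random variables over B with B-transforms B_X and B_Y (defined by M(b) - 1 = B(b)·M(b) where M is the moment generating series), then B_{X+Y} = B_X + B_Y as formal power series in b. -/
open scoped BigOperators Pointwise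

/-- `B⟨X⟩₀`: the non-unital subalgebra of polynomials in `X` with coefficients in the
subalgebra `B` and no free term. -/
noncomputable def polysNoConst {A : Type*} [Ring A] [Algebra ℂ A]
    (B : Subalgebra ℂ A) (X : A) : NonUnitalSubalgebra ℂ A :=
  NonUnitalAlgebra.adjoin ℂ ((B : Set A) * ({X} : Set A) * (B : Set A))

/-- `X` and `Y` are Boolean independent over `B` with respect to the conditional
expectation `E`: for every alternating word of elements of `B⟨X⟩₀` and `B⟨Y⟩₀`,
`E` of the product is the product of the `E`'s. -/
def BooleanIndep {A : Type*} [Ring A] [Algebra ℂ A]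
    (B : Subalgebra ℂ A) (E : A →ₗ[ℂ] A) (X Y : A) : Prop :=
  ∀ l : List (A × Bool),
    (∀ p ∈ l, p.1 ∈ (if p.2 then polysNoConst B X else polysNoConst B Y)) →
    List.Chain' (· ≠ ·) (l.map Prod.snd) →
    E (l.map Prod.fst).prod = (l.map fun p => E p.1).prod

private lemma sum_Icc_one_eq_range {R : Type*} [AddCommMonoid R] (m : ℕ) (f : ℕ → R) :
    ∑ k ∈ Finset.Icc 1 m, f k = ∑ j ∈ Finset.range m, f (j + 1) := by
  induction m with
  | zero => simp
  | succ m ih =>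
      rw [← Finset.insert_Icc_right_eq_Icc_add_one (by omega), Finset.sum_insert (by simp),
        Finset.sum_range_succ, ih, add_comm]

private lemma triangle_swap {R : Type*} [AddCommMonoid R] (n : ℕ) (f : ℕ → ℕ → R) :
    ∑ i ∈ Finset.range n, ∑ j ∈ Finset.range (i + 1), f i j
      = ∑ j ∈ Finset.range n, ∑ q ∈ Finset.range (n - j), f (j + q) j := by
  induction n with
  | zero => simp
  | succ n ih =>
      have h1 : ∀ j ∈ Finset.range n, ∑ q ∈ Finset.range (n + 1 - j), f (j + q) j
          = ∑ q ∈ Finset.range (n - j), f (j + q) j + f n j := by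
        intro j hj
        have hj' : j ≤ n := le_of_lt (Finset.mem_range.mp hj)
        have h2 : n + 1 - j = (n - j) + 1 := by omega
        rw [h2, Finset.sum_range_succ]
        congr 2
        omega
      have hR : ∑ j ∈ Finset.range (n + 1), ∑ q ∈ Finset.range (n + 1 - j), f (j + q) j
          = (∑ j ∈ Finset.range n, ∑ q ∈ Finset.range (n - j), f (j + q) j)
            + (∑ j ∈ Finset.range n, f n j + f n n) := by
        rw [Finset.sum_range_succ, Finset.sum_congr rfl h1, Finset.sum_add_distrib]
        have h3 : n + 1 - n = 1 := by omega
        rw [h3, Finset.sum_range_one]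
        simp only [Nat.add_zero]
        rw [add_assoc]
      rw [Finset.sum_range_succ, ih, hR, Finset.sum_range_succ]

/-- Additivity of the Boolean `B`-transform: if `X, Y` are Boolean independent
self-adjoint random variables over `B`, and for `b ∈ B` the homogeneous components
`BX, BY, BXY` of the `B`-transforms of `X`, `Y`, `X + Y` are defined by the recurrence
`E((Xb)^m) = ∑_{k=1}^m B_{X,k}(b) E((Xb)^{m-k})` (from `M(b) - 1 = B(b)·M(b)`),
then `B_{X+Y} = B_X + B_Y` in each degree. -/
theorem boolean_B_transform_additive {A : Type*} [Ring A] [Algebra ℂ A] [StarRing A]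
    (B : Subalgebra ℂ A) (E : A →ₗ[ℂ] A)
    (hrange : ∀ x, E x ∈ B) (hid : ∀ b ∈ B, E b = b)
    (hbimod : ∀ b₁ ∈ B, ∀ b₂ ∈ B, ∀ x, E (b₁ * x * b₂) = b₁ * E x * b₂)
    (X Y : A) (hXsa : IsSelfAdjoint X) (hYsa : IsSelfAdjoint Y)
    (hindep : BooleanIndep B E X Y)
    (b : A) (hb : b ∈ B)
    (BX BY BXY : ℕ → A)
    (hBX : ∀ m, 1 ≤ m →
      E ((X * b) ^ m) = ∑ k ∈ Finset.Icc 1 m, BX k * E ((X * b) ^ (m - k)))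
    (hBY : ∀ m, 1 ≤ m →
      E ((Y * b) ^ m) = ∑ k ∈ Finset.Icc 1 m, BY k * E ((Y * b) ^ (m - k)))
    (hBXY : ∀ m, 1 ≤ m →
      E (((X + Y) * b) ^ m) = ∑ k ∈ Finset.Icc 1 m, BXY k * E (((X + Y) * b) ^ (m - k))) :
    ∀ m, 1 ≤ m → BXY m = BX m + BY m := by
  classical
  -- notation
  set g : Bool → A := fun c => (if c then X else Y) * b with hgdef
  set G : ℕ → A := fun n => ((X + Y) * b) ^ n with hGdef
  set BC : Bool → ℕ → A := fun c => if c then BX else BY with hBCdef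
  have hE1 : E 1 = 1 := hid 1 (one_mem B)
  -- membership of powers of g c in the corresponding polynomial algebras
  have hgmem : ∀ (c : Bool) (k : ℕ), 1 ≤ k →
      (g c) ^ k ∈ (if c then polysNoConst B X else polysNoConst B Y) := by
    intro c k hk
    have hbase : ∀ Z : A, Z * b ∈ polysNoConst B Z := by
      intro Z
      apply NonUnitalAlgebra.subset_adjoin (R := ℂ)
      have h1 : Z * b = 1 * Z * b := by rw [one_mul]
      rw [h1]
      exact Set.mul_mem_mul (Set.mul_mem_mul (one_mem B) (Set.mem_singleton Z)) hb
    have hgc : g c ∈ (if c then polysNoConst B X else polysNoConst B Y) := by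
      cases c <;> simpa [hgdef] using hbase _
    clear_value g
    induction k with
    | zero => omega
    | succ k ih =>
        rcases Nat.eq_or_lt_of_le hk with h | h
        · simpa [← h] using hgc
        · have := ih (by omega)
          rw [pow_succ]
          cases c <;> simp at this hgc ⊢ <;> exact mul_mem this hgc
  have hgc_ne : ∀ c : Bool, c ≠ !c := by decide
  have hGsucc : ∀ n : ℕ, G (n + 1) = g true * G n + g false * G n := by
    intro n
    show ((X + Y) * b) ^ (n + 1) = _
    rw [pow_succ']
    show ((X + Y) * b) * G n = _
    have h : (X + Y) * b = g true + g false := by simp [hgdef, add_mul]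
    rw [h, add_mul]
  have hGsplit : ∀ (c : Bool) (n : ℕ), G (n + 1) = g c * G n + g (!c) * G n := by
    intro c n
    cases c
    · simpa [Bool.not_false] using (hGsucc n).trans (add_comm _ _)
    · simpa [Bool.not_true] using hGsucc n
  -- the key factorization lemma
  have key : ∀ (n : ℕ) (l : List (A × Bool)) (a : A) (d : Bool),
      (∀ p ∈ l, p.1 ∈ (if p.2 then polysNoConst B X else polysNoConst B Y)) →
      a ∈ (if d then polysNoConst B X else polysNoConst B Y) →
      List.Chain' (· ≠ ·) ((l ++ [(a, d)]).map Prod.snd) →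
      E ((l.map Prod.fst).prod * (a * G n))
        = (l.map fun p => E p.1).prod * E (a * G n) := by
    intro n
    induction n with
    | zero =>
        intro l a d hl ha hch
        have h1 := hindep (l ++ [(a, d)]) (by
          intro p hp
          rcases List.mem_append.mp hp with h | h
          · exact hl p h
          · simp only [List.mem_singleton] at h
            subst h; exact ha) hch
        simp only [List.map_append, List.prod_append, List.map_cons, List.map_nil,
          List.prod_cons, List.prod_nil, mul_one] at h1
        simpa [hGdef, mul_one] using h1
    | succ n ih =>
        intro l a d hl ha hch
        -- split the goal
        have hmem' : ∀ p ∈ l ++ [(a, d)],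
            p.1 ∈ (if p.2 then polysNoConst B X else polysNoConst B Y) := by
          intro p hp
          rcases List.mem_append.mp hp with h | h
          · exact hl p h
          · simp only [List.mem_singleton] at h; subst h; exact ha
        -- chain for extending the last block
        have hch1 : List.Chain' (· ≠ ·) ((l ++ [(a * g d, d)]).map Prod.snd) := by
          have : (l ++ [(a * g d, d)]).map Prod.snd = (l ++ [(a, d)]).map Prod.snd := by
            simp
          rw [this]; exact hch
        -- chain for adding a new block
        have hch2 : List.Chain' (· ≠ ·) (((l ++ [(a, d)]) ++ [(g (!d), !d)]).map Prod.snd) := by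
          rw [List.map_append]
          show List.IsChain _ _
          rw [List.isChain_append]
          refine ⟨hch, List.isChain_singleton _, ?_⟩
          intro x hx y hy
          simp only [List.map_append, List.map_cons, List.map_nil] at hx
          rw [List.getLast?_concat] at hx
          simp only [Option.mem_def, Option.some.injEq] at hx
          simp only [List.map_cons, List.map_nil, List.head?_cons, Option.mem_def,
            Option.some.injEq] at hy
          subst hx; subst hy
          exact hgc_ne d
        have hmm : a * g d ∈ (if d then polysNoConst B X else polysNoConst B Y) := by
          have h2 := hgmem d 1 le_rfl
          rw [pow_one] at h2
          cases d <;> simp at ha h2 ⊢ <;> exact mul_mem ha h2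
        have hmm2 : g (!d) ∈ (if (!d) then polysNoConst B X else polysNoConst B Y) := by
          have h2 := hgmem (!d) 1 le_rfl
          rwa [pow_one] at h2
        -- the two sub-results
        have e1 : E ((l.map Prod.fst).prod * ((a * g d) * G n))
            = (l.map fun p => E p.1).prod * E ((a * g d) * G n) :=
          ih l (a * g d) d hl hmm hch1
        have e2 : E (((l ++ [(a, d)]).map Prod.fst).prod * (g (!d) * G n))
            = ((l ++ [(a, d)]).map fun p => E p.1).prod * E (g (!d) * G n) :=
          ih (l ++ [(a, d)]) (g (!d)) (!d) hmem' hmm2 hch2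
        -- also factor E(a * (g !d * G n)) = E a * E (g !d * G n)
        have hch3 : List.Chain' (· ≠ ·) (([(a, d)] ++ [(g (!d), !d)]).map Prod.snd) := by
          simp only [List.map_append, List.map_cons, List.map_nil]
          exact List.isChain_pair.mpr (hgc_ne d)
        have e3 : E ((([(a, d)] : List (A × Bool)).map Prod.fst).prod * (g (!d) * G n))
            = (([(a, d)] : List (A × Bool)).map fun p => E p.1).prod * E (g (!d) * G n) :=
          ih [(a, d)] (g (!d)) (!d) (by
            intro p hp; simp only [List.mem_singleton] at hp; subst hp; exact ha)
            hmm2 hch3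
        simp only [List.map_cons, List.map_nil, List.prod_cons, List.prod_nil, mul_one] at e3
        -- assemble
        rw [hGsplit d n]
        rw [mul_add, mul_add, map_add, map_add, mul_add]
        congr 1
        · rw [← mul_assoc a (g d) (G n), e1]
        · have hassoc : (l.map Prod.fst).prod * (a * (g (!d) * G n))
              = ((l ++ [(a, d)]).map Prod.fst).prod * (g (!d) * G n) := by
            simp [List.map_append, List.prod_append, mul_assoc]
          rw [hassoc, e2]
          simp only [List.map_append, List.prod_append, List.map_cons, List.map_nil,
            List.prod_cons, List.prod_nil, mul_one]
          rw [mul_assoc, ← e3]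
  -- factorization for a single leading block
  have F : ∀ (c : Bool) (n j : ℕ), 1 ≤ j →
      E ((g c) ^ j * (g (!c) * G n)) = E ((g c) ^ j) * E (g (!c) * G n) := by
    intro c n j hj
    have h := key n [((g c) ^ j, c)] (g (!c)) (!c)
      (by intro p hp; simp only [List.mem_singleton] at hp; subst hp
          exact hgmem c j hj)
      (by have h2 := hgmem (!c) 1 le_rfl; rwa [pow_one] at h2)
      (by simp only [List.map_append, List.map_cons, List.map_nil]
          exact List.isChain_pair.mpr (hgc_ne c))
    simpa using h
  -- the word identity (pure algebra)
  have word : ∀ (c : Bool) (n : ℕ), g c * G n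
      = (g c) ^ (n + 1)
        + ∑ i ∈ Finset.range n, (g c) ^ (i + 1) * (g (!c) * G (n - 1 - i)) := by
    intro c n
    induction n with
    | zero => simp [hGdef, pow_one]
    | succ n ih =>
        rw [hGsplit c n, mul_add, ih, mul_add, Finset.mul_sum]
        rw [Finset.sum_range_succ']
        have h1 : ∀ i ∈ Finset.range n,
            g c * ((g c) ^ (i + 1) * (g (!c) * G (n - 1 - i)))
              = (g c) ^ (i + 1 + 1) * (g (!c) * G (n + 1 - 1 - (i + 1))) := by
          intro i hi
          rw [← mul_assoc, ← pow_succ']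
          congr 3
          omega
        rw [Finset.sum_congr rfl h1]
        have h2 : g c * (g c) ^ (n + 1) = (g c) ^ (n + 1 + 1) := (pow_succ' _ _).symm
        rw [h2]
        have h3 : (g c) ^ (0 + 1) * (g (!c) * G (n + 1 - 1 - 0)) = g c * (g (!c) * G n) := by
          simp
        rw [h3]
        abel
  -- moments notation facts
  have hT0 : E (G 0) = 1 := by simp [hGdef, hE1]
  have hG0 : G 0 = 1 := by simp [hGdef]
  have hM0 : ∀ c : Bool, E ((g c) ^ 0) = 1 := by intro c; simp [hE1]
  -- step 4 : recursion for E(g c * G n)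
  have step4 : ∀ (c : Bool) (n : ℕ),
      E (g c * G n) = E ((g c) ^ (n + 1))
        + ∑ i ∈ Finset.range n, E ((g c) ^ (i + 1)) * E (g (!c) * G (n - 1 - i)) := by
    intro c n
    rw [word c n, map_add, map_sum]
    congr 1
    refine Finset.sum_congr rfl fun i hi => ?_
    exact F c (n - 1 - i) (i + 1) (by omega)
  -- moment recurrences for single variables
  have hM : ∀ (c : Bool) (m : ℕ), 1 ≤ m →
      E ((g c) ^ m) = ∑ k ∈ Finset.Icc 1 m, BC c k * E ((g c) ^ (m - k)) := by
    intro c m hm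
    cases c
    · simpa [hgdef, hBCdef] using hBY m hm
    · simpa [hgdef, hBCdef] using hBX m hm
  -- lemma A : the auxiliary series equals the full moment series
  have hW : ∀ (c : Bool) (r : ℕ),
      E ((g c) ^ r) + ∑ q ∈ Finset.range r, E ((g c) ^ q) * E (g (!c) * G (r - 1 - q))
        = E (G r) := by
    intro c r
    match r with
    | 0 => simp [hT0, hE1]
    | (s + 1) =>
        rw [Finset.sum_range_succ']
        have h1 : ∀ q ∈ Finset.range s,
            E ((g c) ^ (q + 1)) * E (g (!c) * G (s + 1 - 1 - (q + 1)))
              = E ((g c) ^ (q + 1)) * E (g (!c) * G (s - 1 - q)) := by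
          intro q hq
          have hqe : s + 1 - 1 - (q + 1) = s - 1 - q := by omega
          rw [hqe]
        rw [Finset.sum_congr rfl h1]
        have h2 : E ((g c) ^ 0) * E (g (!c) * G (s + 1 - 1 - 0)) = E (g (!c) * G s) := by
          rw [hM0]; simp
        rw [h2]
        rw [hGsplit c s, map_add, step4 c s]
        abel
  -- the star identity
  have star : ∀ (c : Bool) (n : ℕ),
      E (g c * G n) = ∑ k ∈ Finset.Icc 1 (n + 1), BC c k * E (G (n + 1 - k)) := by
    intro c n
    rw [step4 c n]
    -- replace moments by the B-recurrences
    rw [hM c (n + 1) (by omega)]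
    have h1 : ∀ i ∈ Finset.range n,
        E ((g c) ^ (i + 1)) * E (g (!c) * G (n - 1 - i))
          = (∑ k ∈ Finset.Icc 1 (i + 1), BC c k * E ((g c) ^ (i + 1 - k)))
              * E (g (!c) * G (n - 1 - i)) := by
      intro i hi
      rw [← hM c (i + 1) (by omega)]
    rw [Finset.sum_congr rfl h1]
    -- expand the RHS using hW
    have h2 : ∀ k ∈ Finset.Icc 1 (n + 1),
        BC c k * E (G (n + 1 - k))
          = BC c k * E ((g c) ^ (n + 1 - k))
            + ∑ q ∈ Finset.range (n + 1 - k),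
                BC c k * (E ((g c) ^ q) * E (g (!c) * G (n + 1 - k - 1 - q))) := by
      intro k hk
      rw [← hW c (n + 1 - k), mul_add, Finset.mul_sum]
    rw [Finset.sum_congr rfl h2, Finset.sum_add_distrib]
    congr 1
    -- now the double sum identity
    rw [sum_Icc_one_eq_range]
    have h3 : ∀ i ∈ Finset.range n,
        (∑ k ∈ Finset.Icc 1 (i + 1), BC c k * E ((g c) ^ (i + 1 - k)))
            * E (g (!c) * G (n - 1 - i))
          = ∑ j ∈ Finset.range (i + 1),
              BC c (j + 1) * E ((g c) ^ (i - j)) * E (g (!c) * G (n - 1 - i)) := by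
      intro i hi
      rw [sum_Icc_one_eq_range, Finset.sum_mul]
      simp only [Nat.add_sub_add_right]
    rw [Finset.sum_congr rfl h3]
    rw [triangle_swap n (fun i j => BC c (j + 1) * E ((g c) ^ (i - j))
      * E (g (!c) * G (n - 1 - i)))]
    rw [Finset.sum_range_succ]
    have h4 : ∑ q ∈ Finset.range (n + 1 - (n + 1)),
        BC c (n + 1) * (E ((g c) ^ q) * E (g (!c) * G (n + 1 - (n + 1) - 1 - q))) = 0 := by
      simp
    rw [h4, add_zero]
    refine Finset.sum_congr rfl fun j hj => ?_
    have hjn : j < n := Finset.mem_range.mp hj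
    refine Finset.sum_congr (by congr 1; omega) fun q hq => ?_
    have e1 : j + q - j = q := by omega
    have e2 : n - 1 - (j + q) = n + 1 - (j + 1) - 1 - q := by omega
    rw [mul_assoc, e1, e2]
  -- moment recurrence for X + Y
  have momXY : ∀ m : ℕ, 1 ≤ m →
      E (G m) = ∑ k ∈ Finset.Icc 1 m, (BX k + BY k) * E (G (m - k)) := by
    intro m hm
    obtain ⟨s, rfl⟩ : ∃ s, m = s + 1 := ⟨m - 1, by omega⟩
    rw [hGsucc s, map_add, star true s, star false s, ← Finset.sum_add_distrib]
    refine Finset.sum_congr rfl fun k hk => ?_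
    have : BC true k = BX k := by simp [hBCdef]
    have h2 : BC false k = BY k := by simp [hBCdef]
    rw [this, h2, ← add_mul]
  -- uniqueness of the B-transform coefficients
  intro m hm
  induction m using Nat.strong_induction_on with
  | _ m ih =>
      obtain ⟨s, rfl⟩ : ∃ s, m = s + 1 := ⟨m - 1, by omega⟩
      have h1 := hBXY (s + 1) (by omega)
      have h2 := momXY (s + 1) (by omega)
      rw [hGdef] at h2
      simp only at h1 h2
      rw [h1] at h2
      rw [← Finset.insert_Icc_right_eq_Icc_add_one (by omega : 1 ≤ s + 1),
        Finset.sum_insert (by simp), Finset.sum_insert (by simp)] at h2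
      have h3 : ∑ k ∈ Finset.Icc 1 s, BXY k * E (((X + Y) * b) ^ (s + 1 - k))
          = ∑ k ∈ Finset.Icc 1 s, (BX k + BY k) * E (((X + Y) * b) ^ (s + 1 - k)) := by
        refine Finset.sum_congr rfl fun k hk => ?_
        have hk' := Finset.mem_Icc.mp hk
        rw [ih k (by omega) (by omega)]
      rw [h3] at h2
      have h4 : BXY (s + 1) * E (((X + Y) * b) ^ (s + 1 - (s + 1)))
          = (BX (s + 1) + BY (s + 1)) * E (((X + Y) * b) ^ (s + 1 - (s + 1))) := by
        exact add_right_cancel h2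
      simpa [hE1] using h4
end

section
/- If η : B → B is a linear map on a unital algebra B satisfying η(b)·b·η(b) = η(b·η(b)·b) for all b and η is of the general completely positive form η(b) = (1/m)∑ⱼ aⱼ b aⱼ with the aⱼ self-adjoint in a factor (or Mₙ(ℂ)), then m = 1, i.e. η(b) = a b a for a single self-adjoint a (up to the stated normalization). -/
open scoped BigOperators

namespace VarianceForce

open Matrix

variable {n : ℕ}

private lemma sum_mulVec {k : ℕ} (M : Fin k → Matrix (Fin n) (Fin n) ℂ) (v : Fin n → ℂ) :
    (∑ j, M j) *ᵥ v = ∑ j, M j *ᵥ v := by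
  ext i
  simp only [mulVec, dotProduct, Finset.sum_apply, Matrix.sum_apply, Finset.sum_mul]
  rw [Finset.sum_comm]

private lemma dot_sum {k : ℕ} (v : Fin n → ℂ) (f : Fin k → Fin n → ℂ) :
    v ⬝ᵥ (∑ j, f j) = ∑ j, v ⬝ᵥ f j := by
  simp only [dotProduct, Finset.sum_apply, Finset.mul_sum]
  rw [Finset.sum_comm]

private lemma vmv_mulVec (v x : Fin n → ℂ) :
    vecMulVec v (star v) *ᵥ x = (star v ⬝ᵥ x) • v := by
  ext i
  simp only [mulVec, vecMulVec_apply, dotProduct, Pi.smul_apply, smul_eq_mul, Pi.star_apply,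
    Finset.sum_mul, Finset.mul_sum]
  exact Finset.sum_congr rfl fun k _ => by ring

private lemma sa_swap {A : Matrix (Fin n) (Fin n) ℂ} (hA : Aᴴ = A) (x y : Fin n → ℂ) :
    star x ⬝ᵥ (A *ᵥ y) = star (A *ᵥ x) ⬝ᵥ y := by
  rw [star_mulVec, hA, dotProduct_mulVec]

private lemma selfconj {A : Matrix (Fin n) (Fin n) ℂ} (hA : Aᴴ = A) (x : Fin n → ℂ) :
    star (star x ⬝ᵥ (A *ᵥ x)) = star x ⬝ᵥ (A *ᵥ x) := by
  conv_lhs => rw [star_dotProduct]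
  rw [star_star, ← sa_swap hA]

private lemma dot_self_real (x : Fin n → ℂ) :
    star x ⬝ᵥ x = ((∑ i, Complex.normSq (x i) : ℝ) : ℂ) := by
  push_cast
  simp only [dotProduct, Pi.star_apply]
  exact Finset.sum_congr rfl fun i _ => by
    rw [Complex.star_def, ← Complex.normSq_eq_conj_mul_self]

private lemma eq_zero_of_dot_self {x : Fin n → ℂ} (h : star x ⬝ᵥ x = 0) : x = 0 := by
  rw [dot_self_real] at h
  have h' : (∑ i, Complex.normSq (x i) : ℝ) = 0 := by exact_mod_cast h
  funext i
  exact Complex.normSq_eq_zero.mp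
    ((Finset.sum_eq_zero_iff_of_nonneg (fun i _ => Complex.normSq_nonneg (x i))).mp h' i
      (Finset.mem_univ i))

private lemma sumsq_real {k : ℕ} (c : Fin k → ℂ) (hc : ∀ j, star (c j) = c j) :
    ∑ j, c j * c j = ((∑ j, Complex.normSq (c j) : ℝ) : ℂ) := by
  push_cast
  refine Finset.sum_congr rfl fun j _ => ?_
  have hj : c j * c j = c j * star (c j) := by rw [hc j]
  rw [hj, show star (c j) = (starRingEnd ℂ) (c j) from rfl, Complex.mul_conj]

private lemma sumsq_zero {k : ℕ} {c : Fin k → ℂ} (hc : ∀ j, star (c j) = c j)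
    (h : ∑ j, c j * c j = 0) : ∀ j, c j = 0 := by
  rw [sumsq_real c hc] at h
  have h' : (∑ j, Complex.normSq (c j) : ℝ) = 0 := by exact_mod_cast h
  intro j
  exact Complex.normSq_eq_zero.mp
    ((Finset.sum_eq_zero_iff_of_nonneg (fun j _ => Complex.normSq_nonneg (c j))).mp h' j
      (Finset.mem_univ j))

private lemma sumnormsq_zero {k : ℕ} {d : Fin k → ℂ}
    (h : ∑ j, d j * star (d j) = 0) : ∀ j, d j = 0 := by
  have hsum : ∑ j, d j * star (d j) = ((∑ j, Complex.normSq (d j) : ℝ) : ℂ) := by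
    push_cast
    exact Finset.sum_congr rfl fun j _ => by
      rw [Complex.star_def, Complex.mul_conj]
  rw [hsum] at h
  have h' : (∑ j, Complex.normSq (d j) : ℝ) = 0 := by exact_mod_cast h
  intro j
  exact Complex.normSq_eq_zero.mp
    ((Finset.sum_eq_zero_iff_of_nonneg (fun j _ => Complex.normSq_nonneg (d j))).mp h' j
      (Finset.mem_univ j))

private lemma quadform_zero {M : Matrix (Fin n) (Fin n) ℂ}
    (h : ∀ x, star x ⬝ᵥ (M *ᵥ x) = 0) : M = 0 := by
  have e : ∀ (r s : Fin n), star (Pi.single r (1:ℂ)) ⬝ᵥ (M *ᵥ Pi.single s 1) = M r s := by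
    intro r s
    simp [mulVec_single, dotProduct, Pi.single_apply, Pi.star_apply, apply_ite]
  have key : ∀ (c : ℂ) (p q : Fin n), star c * M q p + c * M p q = 0 := by
    intro c p q
    have hp := h (Pi.single p 1)
    have hq := h (Pi.single q 1)
    have hpq := h ((Pi.single p 1 : Fin n → ℂ) + c • (Pi.single q 1 : Fin n → ℂ))
    simp only [mulVec_add, mulVec_smul, star_add, star_smul, add_dotProduct,
      smul_dotProduct, dotProduct_add, dotProduct_smul, smul_eq_mul] at hpq
    rw [e, e, e, e] at hpq
    rw [e] at hp
    rw [e] at hq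
    linear_combination hpq - hp - (star c * c) * hq
  ext p q
  have h1 := key 1 p q
  have hI := key Complex.I p q
  have hpp := h (Pi.single p 1)
  rw [e] at hpp
  simp only [star_one, one_mul, Complex.star_def, Complex.conj_I] at h1 hI
  rw [Matrix.zero_apply]
  have h2 : (2 : ℂ) * M p q = 0 := by
    linear_combination h1 - Complex.I * hI + (M p q - M q p) * Complex.I_sq
  simpa using h2

private lemma key_prop {A C : Matrix (Fin n) (Fin n) ℂ} (hC : Cᴴ = C)
    (hrel : ∀ v, (star v ⬝ᵥ (A *ᵥ v)) • (C *ᵥ v) = (star v ⬝ᵥ (C *ᵥ v)) • (A *ᵥ v))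
    (v₀ : Fin n → ℂ) (h0 : C *ᵥ v₀ = 0) (hc0 : star v₀ ⬝ᵥ (A *ᵥ v₀) ≠ 0) : C = 0 := by
  have hCw : ∀ w, C *ᵥ w = 0 := by
    intro w
    have hv0Cw : star v₀ ⬝ᵥ (C *ᵥ w) = 0 := by
      rw [sa_swap hC, h0]
      simp
    have hwCv0 : ∀ w' : Fin n → ℂ, star w' ⬝ᵥ (C *ᵥ v₀) = 0 := by
      intro w'; rw [h0]; simp
    have inst : ∀ t : ℂ, star t = t → ∀ i : Fin n,
        (star v₀ ⬝ᵥ (A *ᵥ v₀) + t * (star v₀ ⬝ᵥ (A *ᵥ w)) + t * (star w ⬝ᵥ (A *ᵥ v₀))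
          + t * t * (star w ⬝ᵥ (A *ᵥ w))) * (t * (C *ᵥ w) i)
        = (t * t * (star w ⬝ᵥ (C *ᵥ w))) * ((A *ᵥ v₀) i + t * (A *ᵥ w) i) := by
      intro t ht i
      have h := congrFun (hrel (v₀ + t • w)) i
      simp only [mulVec_add, mulVec_smul, h0, zero_add, star_add, star_smul, ht,
        add_dotProduct, smul_dotProduct, dotProduct_add, dotProduct_smul, smul_eq_mul,
        Pi.smul_apply, Pi.add_apply, hv0Cw, hwCv0, Pi.zero_apply, mul_zero, add_zero,
        zero_mul] at h
      linear_combination h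
    funext i
    have e1 := inst 1 (by simp) i
    have em1 := inst (-1) (by simp) i
    have e2 := inst 2 (by norm_num) i
    have hmain : (star v₀ ⬝ᵥ (A *ᵥ v₀)) * (C *ᵥ w) i = 0 := by
      linear_combination e1 - (1/3 : ℂ) * em1 - (1/6 : ℂ) * e2
    have := mul_eq_zero.mp hmain
    simpa using this.resolve_left hc0
  ext p q
  have := congrFun (hCw (Pi.single q 1)) p
  simpa [mulVec_single] using this

private lemma eqE {m : ℕ} (hm : 0 < m) (a : Fin m → Matrix (Fin n) (Fin n) ℂ)
    (ha : ∀ j, (a j)ᴴ = a j)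
    (hid : ∀ b : Matrix (Fin n) (Fin n) ℂ,
      ((m : ℂ)⁻¹ • ∑ j, a j * b * a j) * b * ((m : ℂ)⁻¹ • ∑ j, a j * b * a j) =
        (m : ℂ)⁻¹ • ∑ j, a j * (b * ((m : ℂ)⁻¹ • ∑ i, a i * b * a i) * b) * a j)
    (v z : Fin n → ℂ) :
    (∑ k, (star (a k *ᵥ v) ⬝ᵥ z) * (star v ⬝ᵥ (a k *ᵥ v))) • ∑ j, (star v ⬝ᵥ (a j *ᵥ v)) • (a j *ᵥ v)
      = (∑ k, (star v ⬝ᵥ (a k *ᵥ v)) * (star v ⬝ᵥ (a k *ᵥ v))) •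
          ∑ j, (star (a j *ᵥ v) ⬝ᵥ z) • (a j *ᵥ v) := by
  set K : ℂ := (m : ℂ)⁻¹ with hK
  have hKne : K ≠ 0 := inv_ne_zero (Nat.cast_ne_zero.mpr hm.ne')
  set bv := vecMulVec v (star v) with hbv
  set η := K • ∑ j, a j * bv * a j with hη
  set w : Fin m → Fin n → ℂ := fun j => a j *ᵥ v with hw
  set c : Fin m → ℂ := fun j => star v ⬝ᵥ w j with hc
  set u : Fin n → ℂ := ∑ j, c j • w j with hu
  set σ : ℂ := ∑ j, c j * c j with hσ
  have hEta : ∀ x, η *ᵥ x = K • ∑ j, (star v ⬝ᵥ (a j *ᵥ x)) • w j := by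
    intro x
    rw [hη, smul_mulVec, sum_mulVec]
    congr 1
    refine Finset.sum_congr rfl fun j _ => ?_
    rw [← mulVec_mulVec, ← mulVec_mulVec, hbv, vmv_mulVec, mulVec_smul]
  have hEtav : η *ᵥ v = K • u := by rw [hEta v, hu]
  have hvu : star v ⬝ᵥ u = σ := by
    rw [hu, dot_sum, hσ]
    exact Finset.sum_congr rfl fun k _ => by rw [dotProduct_smul, smul_eq_mul, mul_comm]
  have hLz : (η * bv * η) *ᵥ z
      = (K * (∑ k, (star v ⬝ᵥ (a k *ᵥ z)) * c k)) • (K • u) := by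
    rw [← mulVec_mulVec, ← mulVec_mulVec, hEta z, hbv, vmv_mulVec, dotProduct_smul, dot_sum]
    have : ∀ k, star v ⬝ᵥ ((star v ⬝ᵥ (a k *ᵥ z)) • w k) = (star v ⬝ᵥ (a k *ᵥ z)) * c k :=
      fun k => by rw [dotProduct_smul, smul_eq_mul]
    rw [Finset.sum_congr rfl fun k _ => this k]
    rw [smul_eq_mul, mulVec_smul, hEtav]
  have hbvy : ∀ x, bv *ᵥ x = (star v ⬝ᵥ x) • v := by
    intro x; rw [hbv, vmv_mulVec]
  have hG : ∀ y, (bv * η * bv) *ᵥ y = (K * σ * (star v ⬝ᵥ y)) • v := by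
    intro y
    calc (bv * η * bv) *ᵥ y = bv *ᵥ (η *ᵥ (bv *ᵥ y)) := by simp only [← mulVec_mulVec]
      _ = bv *ᵥ (η *ᵥ ((star v ⬝ᵥ y) • v)) := by rw [hbvy y]
      _ = bv *ᵥ ((star v ⬝ᵥ y) • (K • u)) := by rw [mulVec_smul, hEtav]
      _ = (star v ⬝ᵥ y) • (K • (bv *ᵥ u)) := by rw [mulVec_smul, mulVec_smul]
      _ = (star v ⬝ᵥ y) • (K • (σ • v)) := by rw [hbvy, hvu]
      _ = (K * σ * (star v ⬝ᵥ y)) • v := by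
          simp only [smul_smul]; congr 1; ring
  have hRz : (K • ∑ j, a j * (bv * η * bv) * a j) *ᵥ z
      = (K * (K * σ)) • ∑ j, (star v ⬝ᵥ (a j *ᵥ z)) • w j := by
    rw [smul_mulVec, sum_mulVec]
    have : ∀ j, (a j * (bv * η * bv) * a j) *ᵥ z
        = (K * σ * (star v ⬝ᵥ (a j *ᵥ z))) • w j := by
      intro j
      rw [← mulVec_mulVec, ← mulVec_mulVec, hG, mulVec_smul]
    rw [Finset.sum_congr rfl fun j _ => this j, Finset.smul_sum, Finset.smul_sum]
    refine Finset.sum_congr rfl fun j _ => ?_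
    simp only [smul_smul]
    congr 1
    ring
  have hmain := congrArg (fun M => M *ᵥ z) (hid bv)
  simp only at hmain
  rw [hLz] at hmain
  rw [show (K • ∑ j, a j * (bv * η * bv) * a j) = ((m:ℂ)⁻¹ • ∑ j, a j * (bv * ((m:ℂ)⁻¹ • ∑ i, a i * bv * a i) * bv) * a j) from rfl] at hRz
  rw [hRz] at hmain
  have hswap : ∀ k, star v ⬝ᵥ (a k *ᵥ z) = star (a k *ᵥ v) ⬝ᵥ z := fun k => sa_swap (ha k) v z
  simp only [hswap] at hmain
  have h2 : (K * K) • ((∑ k, (star (a k *ᵥ v) ⬝ᵥ z) * c k) • u)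
      = (K * K) • (σ • ∑ j, (star (a j *ᵥ v) ⬝ᵥ z) • w j) := by
    rw [smul_smul, smul_smul]
    calc (K * K * (∑ k, (star (a k *ᵥ v) ⬝ᵥ z) * c k)) • u
        = (K * (∑ k, (star (a k *ᵥ v) ⬝ᵥ z) * c k)) • (K • u) := by
          rw [smul_smul]; congr 1; ring
      _ = (K * (K * σ)) • ∑ j, (star (a j *ᵥ v) ⬝ᵥ z) • w j := hmain
      _ = (K * K * σ) • ∑ j, (star (a j *ᵥ v) ⬝ᵥ z) • w j := by congr 1; ring
  have h3 := smul_right_injective (Fin n → ℂ) (mul_ne_zero hKne hKne) h2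
  rw [hu] at h3
  exact h3

private lemma prop_abstract {m : ℕ} (w : Fin m → Fin n → ℂ) (c : Fin m → ℂ)
    (v : Fin n → ℂ)
    (creal : ∀ i, star (c i) = c i)
    (hvw : ∀ i, star v ⬝ᵥ w i = c i)
    (hE : ∀ z : Fin n → ℂ,
      (∑ k, (star (w k) ⬝ᵥ z) * c k) • (∑ i, c i • w i)
        = (∑ k, c k * c k) • ∑ i, (star (w i) ⬝ᵥ z) • w i) :
    ∀ j k : Fin m, c k • w j = c j • w k := by
  intro j k
  by_cases hσ0 : ∑ i, c i * c i = 0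
  · have hc0 := sumsq_zero creal hσ0
    rw [hc0 j, hc0 k, zero_smul, zero_smul]
  · set u : Fin n → ℂ := ∑ i, c i • w i with hu
    set σ : ℂ := ∑ i, c i * c i with hσ
    have hDz : ∀ z, star u ⬝ᵥ z = ∑ i, (star (w i) ⬝ᵥ z) * c i := by
      intro z
      rw [hu, star_sum]
      rw [show (∑ i, star (c i • w i)) ⬝ᵥ z = ∑ i, star (c i • w i) ⬝ᵥ z from by
        simp only [dotProduct, Finset.sum_apply, Finset.sum_mul]; rw [Finset.sum_comm]]
      refine Finset.sum_congr rfl fun i _ => ?_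
      rw [star_smul, smul_dotProduct, creal i, smul_eq_mul, mul_comm]
    have hpair : ∀ z, (star u ⬝ᵥ z) * star (star u ⬝ᵥ z)
        = σ * ∑ i, (star (w i) ⬝ᵥ z) * star (star (w i) ⬝ᵥ z) := by
      intro z
      have h := congrArg (fun y => star z ⬝ᵥ y) (hE z)
      simp only [dotProduct_smul, smul_eq_mul] at h
      have e1 : star z ⬝ᵥ u = star (star u ⬝ᵥ z) := by rw [star_dotProduct]
      have e2 : ∀ i, star z ⬝ᵥ ((star (w i) ⬝ᵥ z) • w i)
          = (star (w i) ⬝ᵥ z) * star (star (w i) ⬝ᵥ z) := by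
        intro i
        rw [dotProduct_smul, smul_eq_mul]
        congr 1
        rw [star_dotProduct]
      rw [e1, dot_sum, Finset.sum_congr rfl fun i _ => e2 i] at h
      rw [← hDz z] at h
      exact h
    have hzero : ∀ z, star u ⬝ᵥ z = 0 → ∀ i, star (w i) ⬝ᵥ z = 0 := by
      intro z hz i
      have h := hpair z
      rw [hz, zero_mul] at h
      have h2 : ∑ i, (star (w i) ⬝ᵥ z) * star (star (w i) ⬝ᵥ z) = 0 := by
        rcases mul_eq_zero.mp h.symm with h' | h'
        · exact absurd h' hσ0
        · exact h'
      exact sumnormsq_zero h2 i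
    have hune : u ≠ 0 := by
      intro h0
      apply hσ0
      apply Finset.sum_eq_zero
      intro i _
      have hwz : star (w i) ⬝ᵥ w i = 0 := by
        apply hzero (w i) _ i
        rw [h0]
        simp
      have hwi : w i = 0 := eq_zero_of_dot_self hwz
      have hci : c i = 0 := by rw [← hvw i, hwi]; simp
      rw [hci, mul_zero]
    have he : star u ⬝ᵥ u ≠ 0 := fun h => hune (eq_zero_of_dot_self h)
    have hG : ∀ i, (star u ⬝ᵥ u) • w i = (star u ⬝ᵥ w i) • u := by
      intro i
      set z : Fin n → ℂ := (star u ⬝ᵥ u) • w i - (star u ⬝ᵥ w i) • u with hz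
      have hz1 : star u ⬝ᵥ z = 0 := by
        rw [hz, dotProduct_sub, dotProduct_smul, dotProduct_smul, smul_eq_mul, smul_eq_mul]
        ring
      have hz2 : star (w i) ⬝ᵥ z = 0 := hzero z hz1 i
      have hz3 : star z ⬝ᵥ z = 0 := by
        rw [hz, star_sub, star_smul, star_smul, sub_dotProduct, smul_dotProduct,
          smul_dotProduct, ← hz, smul_eq_mul, smul_eq_mul, hz2, hz1, mul_zero, mul_zero,
          sub_zero]
      have h4 := eq_zero_of_dot_self hz3
      rw [hz] at h4
      exact (sub_eq_zero.mp h4)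
    have hvu : star v ⬝ᵥ u = σ := by
      rw [hu, dot_sum, hσ]
      exact Finset.sum_congr rfl fun i _ => by
        rw [dotProduct_smul, smul_eq_mul, hvw i, mul_comm]
    have hcd : ∀ i, (star u ⬝ᵥ u) * c i = (star u ⬝ᵥ w i) * σ := by
      intro i
      have h := congrArg (fun y => star v ⬝ᵥ y) (hG i)
      simp only [dotProduct_smul, smul_eq_mul] at h
      rw [hvu, hvw i] at h
      exact h
    have l1 : (σ * (star u ⬝ᵥ u)) • (c k • w j) = (σ * c k * (star u ⬝ᵥ w j)) • u := by
      rw [smul_smul, show σ * (star u ⬝ᵥ u) * c k = (σ * c k) * (star u ⬝ᵥ u) from by ring,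
        ← smul_smul, hG j, smul_smul]
    have l2 : (σ * (star u ⬝ᵥ u)) • (c j • w k) = (σ * c j * (star u ⬝ᵥ w k)) • u := by
      rw [smul_smul, show σ * (star u ⬝ᵥ u) * c j = (σ * c j) * (star u ⬝ᵥ u) from by ring,
        ← smul_smul, hG k, smul_smul]
    have h1 : (σ * (star u ⬝ᵥ u)) • (c k • w j) = (σ * (star u ⬝ᵥ u)) • (c j • w k) := by
      rw [l1, l2]
      congr 1
      linear_combination c j * hcd k - c k * hcd j
    exact smul_right_injective (Fin n → ℂ) (mul_ne_zero hσ0 he) h1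

end VarianceForce

open Matrix VarianceForce in
/-- If a completely positive map `η(b) = (1/m) ∑ⱼ aⱼ b aⱼ` on `Mₙ(ℂ)` (with the `aⱼ`
self-adjoint) satisfies the identity `η(b)·b·η(b) = η(b·η(b)·b)` for all `b`, then
`η(b) = a b a` for a single self-adjoint `a`. -/
theorem variance_identity_forces_single_a {n m : ℕ} (hm : 0 < m)
    (a : Fin m → Matrix (Fin n) (Fin n) ℂ) (ha : ∀ j, IsSelfAdjoint (a j))
    (hid : ∀ b : Matrix (Fin n) (Fin n) ℂ,
      ((m : ℂ)⁻¹ • ∑ j, a j * b * a j) * b * ((m : ℂ)⁻¹ • ∑ j, a j * b * a j) =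
        (m : ℂ)⁻¹ • ∑ j, a j * (b * ((m : ℂ)⁻¹ • ∑ i, a i * b * a i) * b) * a j) :
    ∃ c : Matrix (Fin n) (Fin n) ℂ, IsSelfAdjoint c ∧
      ∀ b : Matrix (Fin n) (Fin n) ℂ,
        (m : ℂ)⁻¹ • ∑ j, a j * b * a j = c * b * c := by
  classical
  have hsa : ∀ j, (a j)ᴴ = a j := fun j => (ha j).star_eq
  by_cases h0 : ∀ j, a j = 0
  · refine ⟨0, by simp [_root_.IsSelfAdjoint], ?_⟩
    intro b
    simp [h0]
  · push_neg at h0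
    obtain ⟨j₀, hj₀⟩ := h0
    have P : ∀ (j k : Fin m) (v : Fin n → ℂ),
        (star v ⬝ᵥ (a k *ᵥ v)) • (a j *ᵥ v) = (star v ⬝ᵥ (a j *ᵥ v)) • (a k *ᵥ v) := by
      intro j k v
      exact prop_abstract (fun i => a i *ᵥ v) (fun i => star v ⬝ᵥ (a i *ᵥ v)) v
        (fun i => selfconj (hsa i) v) (fun i => rfl) (fun z => eqE hm a hsa hid v z) j k
    have hv : ¬ (∀ v, star v ⬝ᵥ (a j₀ *ᵥ v) = 0) := fun h => hj₀ (quadform_zero h)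
    push_neg at hv
    obtain ⟨v₀, hv₀⟩ := hv
    set lam : Fin m → ℂ := fun j => (star v₀ ⬝ᵥ (a j *ᵥ v₀)) / (star v₀ ⬝ᵥ (a j₀ *ᵥ v₀))
      with hlam
    have lamreal : ∀ j, star (lam j) = lam j := by
      intro j
      rw [hlam]
      simp only
      rw [star_div₀, selfconj (hsa j) v₀, selfconj (hsa j₀) v₀]
    have hprop : ∀ j, a j = lam j • a j₀ := by
      intro j
      have hCsa : (a j - lam j • a j₀)ᴴ = a j - lam j • a j₀ := by
        rw [conjTranspose_sub, conjTranspose_smul, hsa j, hsa j₀, lamreal j]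
      have hrel : ∀ v, (star v ⬝ᵥ (a j₀ *ᵥ v)) • ((a j - lam j • a j₀) *ᵥ v)
          = (star v ⬝ᵥ ((a j - lam j • a j₀) *ᵥ v)) • (a j₀ *ᵥ v) := by
        intro v
        have hP := P j j₀ v
        simp only [sub_mulVec, smul_mulVec, dotProduct_sub, dotProduct_smul,
          smul_eq_mul, smul_sub, sub_smul]
        rw [hP]
        congr 1
        rw [smul_smul, mul_comm (star v ⬝ᵥ (a j₀ *ᵥ v)) (lam j)]
      have h0C : (a j - lam j • a j₀) *ᵥ v₀ = 0 := by
        rw [sub_mulVec, smul_mulVec]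
        have heq : a j *ᵥ v₀ = lam j • (a j₀ *ᵥ v₀) := by
          apply smul_right_injective (Fin n → ℂ) hv₀
          show (star v₀ ⬝ᵥ (a j₀ *ᵥ v₀)) • (a j *ᵥ v₀)
              = (star v₀ ⬝ᵥ (a j₀ *ᵥ v₀)) • (lam j • (a j₀ *ᵥ v₀))
          rw [P j j₀ v₀, smul_smul]
          congr 1
          rw [hlam]
          simp only
          field_simp
        rw [heq, sub_self]
      have := key_prop hCsa hrel v₀ h0C hv₀
      rw [sub_eq_zero] at this
      exact this
    set S : ℝ := (∑ j, Complex.normSq (lam j)) / m with hS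
    have hSnn : (0:ℝ) ≤ S :=
      div_nonneg (Finset.sum_nonneg fun j _ => Complex.normSq_nonneg _) (Nat.cast_nonneg m)
    refine ⟨((Real.sqrt S : ℝ) : ℂ) • a j₀, ?_, ?_⟩
    · show star (((Real.sqrt S : ℝ) : ℂ) • a j₀) = _
      rw [star_smul, (ha j₀).star_eq, Complex.star_def, Complex.conj_ofReal]
    · intro b
      have expand : ∀ j, a j * b * a j = (lam j * lam j) • (a j₀ * b * a j₀) := by
        intro j
        conv_lhs => rw [hprop j]
        rw [smul_mul_assoc, smul_mul_assoc, mul_smul_comm, smul_smul]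
      rw [Finset.sum_congr rfl fun j _ => expand j, ← Finset.sum_smul, smul_smul]
      rw [smul_mul_assoc, smul_mul_assoc, mul_smul_comm, smul_smul]
      congr 1
      rw [sumsq_real lam lamreal]
      rw [show ((Real.sqrt S : ℝ):ℂ) * ((Real.sqrt S : ℝ):ℂ)
          = ((Real.sqrt S * Real.sqrt S : ℝ) : ℂ) from by push_cast; ring,
        Real.mul_self_sqrt hSnn, hS]
      have hmne : (m:ℂ) ≠ 0 := Nat.cast_ne_zero.mpr hm.ne'
      push_cast
      field_simp
end
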